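/- arXiv:1610.03870 — 3 statements merged into one kernel-verified Lean document; each statement's English description precedes it below -/
import Mathlib

section
/- Let s ∈ Spin(1,n) ⊂ C⁺(q) for q = x₁² − x₂² − ⋯ − x_{n+1}², written s = Σ_M s_M e_M in the standard basis, and let φ_s(x) = s x s* be the induced isometry of H^n. Then cosh(d(e₁, φ_s(e₁))) = Σ_M s_M². -/
open CliffordAlgebra

/-- The Minkowski bilinear form of signature `(1,n)` on `ℝ^{n+1}`. -/
noncomputable def mink {n : ℕ} (x y : Fin (n + 1) → ℝ) : ℝ :=
  x 0 * y 0 - ∑ i : Fin n, x i.succ * y i.succ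

/-- The hyperbolic distance on the hyperboloid model: `cosh d(x,y) = ⟨x,y⟩`. -/
noncomputable def hdist {n : ℕ} (x y : Fin (n + 1) → ℝ) : ℝ :=
  Real.log (mink x y + Real.sqrt ((mink x y) ^ 2 - 1))

/-- The base point `e₁ = (1,0,…,0)` of the hyperboloid model. -/
def basePt (n : ℕ) : Fin (n + 1) → ℝ := fun i => if i = 0 then 1 else 0

namespace CoshSpinAux

variable {n : ℕ} (Q : QuadraticForm ℝ (Fin (n + 1) → ℝ))

/-- the `i`-th Clifford generator -/
noncomputable def gen (i : Fin (n + 1)) : CliffordAlgebra Q := ι Q (Pi.single i 1)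

/-- product of generators along a list -/
noncomputable def pr (l : List (Fin (n + 1))) : CliffordAlgebra Q := (l.map (gen Q)).prod

@[simp] lemma pr_nil : pr Q ([] : List (Fin (n+1))) = 1 := rfl

lemma pr_cons (a : Fin (n+1)) (l : List (Fin (n+1))) :
    pr Q (a :: l) = gen Q a * pr Q l := by
  simp [pr]

lemma pr_append (l₁ l₂ : List (Fin (n+1))) :
    pr Q (l₁ ++ l₂) = pr Q l₁ * pr Q l₂ := by
  simp [pr]

lemma pr_singleton (a : Fin (n+1)) : pr Q [a] = gen Q a := by simp [pr]

lemma reverse_pr (l : List (Fin (n+1))) : reverse (pr Q l) = pr Q l.reverse := by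
  induction l with
  | nil => simp [pr]
  | cons a t ih =>
      rw [pr_cons, reverse.map_mul, ih, List.reverse_cons, pr_append, pr_singleton,
        gen, reverse_ι]

lemma Qval (hQ : ∀ x, Q x = x 0 ^ 2 - ∑ i : Fin n, x i.succ ^ 2) (a : Fin (n+1)) : Q (Pi.single a 1) = if a = 0 then 1 else -1 := by
  rw [hQ]
  by_cases ha : a = 0
  · subst ha
    simp [Pi.single_apply, Fin.succ_ne_zero]
  · obtain ⟨j, rfl⟩ := Fin.exists_succ_eq.mpr ha
    have h0 : (Pi.single (j.succ) 1 : Fin (n+1) → ℝ) 0 = 0 := by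
      simp [Pi.single_apply, (Fin.succ_ne_zero j).symm]
    rw [h0]
    have : ∀ i : Fin n, ((Pi.single (j.succ) 1 : Fin (n+1) → ℝ) i.succ) ^ 2 =
        if i = j then 1 else 0 := by
      intro i
      by_cases hij : i = j
      · subst hij; simp [Pi.single_apply]
      · simp [Pi.single_apply, fun h => hij (Fin.succ_injective _ h), hij]
    simp [this, ha]


lemma polar_zero (hQ : ∀ x, Q x = x 0 ^ 2 - ∑ i : Fin n, x i.succ ^ 2)
    {a c : Fin (n+1)} (hac : a ≠ c) :
    QuadraticMap.polar Q (Pi.single a 1) (Pi.single c 1) = 0 := by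
  have hz : ∀ j, (Pi.single a 1 : Fin (n+1) → ℝ) j * (Pi.single c 1 : Fin (n+1) → ℝ) j = 0 := by
    intro j
    rcases eq_or_ne j c with hj | hj
    · have h1 : (Pi.single a 1 : Fin (n+1) → ℝ) j = 0 := by
        subst hj; simp [Pi.single_apply, Ne.symm hac]
      rw [h1, zero_mul]
    · have h1 : (Pi.single c 1 : Fin (n+1) → ℝ) j = 0 := by
        simp [Pi.single_apply, hj]
      rw [h1, mul_zero]
  simp only [QuadraticMap.polar, hQ, Pi.add_apply]
  rw [show ∑ i : Fin n, ((Pi.single a 1 : Fin (n+1) → ℝ) i.succ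
        + (Pi.single c 1 : Fin (n+1) → ℝ) i.succ) ^ 2
      = ∑ i : Fin n, ((Pi.single a 1 : Fin (n+1) → ℝ) i.succ ^ 2
        + (Pi.single c 1 : Fin (n+1) → ℝ) i.succ ^ 2) from
    Finset.sum_congr rfl fun i _ => by nlinarith [hz i.succ]]
  rw [Finset.sum_add_distrib]
  nlinarith [hz 0]

lemma anticomm (hQ : ∀ x, Q x = x 0 ^ 2 - ∑ i : Fin n, x i.succ ^ 2)
    {a c : Fin (n+1)} (hac : a ≠ c) :
    gen Q a * gen Q c = -(gen Q c * gen Q a) := by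
  have h := CliffordAlgebra.ι_mul_ι_add_swap (Q := Q) (Pi.single a 1) (Pi.single c 1)
  rw [polar_zero Q hQ hac, map_zero] at h
  have := eq_neg_of_add_eq_zero_left h
  simpa [gen] using this

lemma gen_sq (hQ : ∀ x, Q x = x 0 ^ 2 - ∑ i : Fin n, x i.succ ^ 2) (a : Fin (n+1)) :
    gen Q a * gen Q a = algebraMap ℝ _ (if a = 0 then 1 else -1) := by
  rw [gen, ι_sq_scalar, Qval Q hQ]

lemma gen0_sq (hQ : ∀ x, Q x = x 0 ^ 2 - ∑ i : Fin n, x i.succ ^ 2) :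
    gen Q 0 * gen Q 0 = 1 := by
  rw [gen_sq Q hQ]; simp

lemma base2 (hQ : ∀ x, Q x = x 0 ^ 2 - ∑ i : Fin n, x i.succ ^ 2) (a : Fin (n+1)) :
    gen Q a * gen Q 0 * gen Q a = gen Q 0 := by
  by_cases ha : a = 0
  · subst ha; rw [gen0_sq Q hQ, one_mul]
  · rw [anticomm Q hQ ha, neg_mul, mul_assoc, gen_sq Q hQ, if_neg ha]
    rw [← Algebra.commutes (-1 : ℝ) (gen Q 0)]
    simp

lemma Dlem (hQ : ∀ x, Q x = x 0 ^ 2 - ∑ i : Fin n, x i.succ ^ 2) :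
    ∀ l : List (Fin (n+1)), pr Q l * gen Q 0 * pr Q l.reverse = gen Q 0 := by
  intro l
  induction l with
  | nil => simp [gen0_sq Q hQ]
  | cons a t ih =>
      rw [List.reverse_cons, pr_append, pr_cons, pr_singleton]
      have e1 : gen Q a * pr Q t * gen Q 0 * (pr Q t.reverse * gen Q a)
          = gen Q a * (pr Q t * gen Q 0 * pr Q t.reverse) * gen Q a := by
        simp only [mul_assoc]
      rw [e1, ih, base2 Q hQ]

lemma Elem (hQ : ∀ x, Q x = x 0 ^ 2 - ∑ i : Fin n, x i.succ ^ 2) :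
    ∀ l : List (Fin (n+1)), ∃ ε : ℝ, (ε = 1 ∨ ε = -1) ∧
      pr Q l * pr Q l.reverse = algebraMap ℝ _ ε := by
  intro l
  induction l with
  | nil => exact ⟨1, Or.inl rfl, by simp⟩
  | cons a t ih =>
      obtain ⟨ε, hε, hmul⟩ := ih
      refine ⟨ε * (if a = 0 then 1 else -1), ?_, ?_⟩
      · rcases hε with h | h <;> subst h <;> by_cases ha : a = 0 <;> simp [ha]
      · rw [List.reverse_cons, pr_append, pr_cons, pr_singleton]
        have e1 : gen Q a * pr Q t * (pr Q t.reverse * gen Q a)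
            = gen Q a * (pr Q t * pr Q t.reverse) * gen Q a := by
          simp only [mul_assoc]
        rw [e1, hmul, ← Algebra.commutes ε (gen Q a), mul_assoc, gen_sq Q hQ,
          ← map_mul]


lemma sd_insert_self {i : Fin (n+1)} {T : Finset (Fin (n+1))} (h : i ∉ T) :
    symmDiff {i} (insert i T) = T := by
  ext x
  by_cases hx : x = i <;>
    simp [Finset.mem_symmDiff, hx, h] <;> tauto

lemma sd_not_mem {a : Fin (n+1)} {T : Finset (Fin (n+1))} (h : a ∉ T) :
    symmDiff {a} T = insert a T := by
  ext x
  by_cases hx : x = a <;>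
    simp [Finset.mem_symmDiff, hx, h] <;> tauto

lemma sd_insert_comm {i a : Fin (n+1)} {T : Finset (Fin (n+1))} (hia : i ≠ a) (h : i ∉ T) :
    insert i (symmDiff {a} T) = symmDiff {a} (insert i T) := by
  ext x
  by_cases hx : x = i <;>
    simp [Finset.mem_symmDiff, hx, hia, Ne.symm hia, h] <;> tauto

lemma keyIns (hQ : ∀ x, Q x = x 0 ^ 2 - ∑ i : Fin n, x i.succ ^ 2) :
    ∀ (m : List (Fin (n+1))), m.Pairwise (· < ·) → ∀ a : Fin (n+1), ∃ c : ℝ,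
      ∃ m' : List (Fin (n+1)), m'.Pairwise (· < ·) ∧
        m'.toFinset = symmDiff {a} m.toFinset ∧
        gen Q a * pr Q m = c • pr Q m' := by
  intro m
  induction m with
  | nil =>
      intro _ a
      refine ⟨1, [a], List.pairwise_singleton _ a, by simp [sd_not_mem (Finset.notMem_empty a)], by simp [pr_singleton]⟩
  | cons i t IH =>
      intro hs a
      have ht : t.Pairwise (· < ·) := hs.of_cons
      have hit : ∀ x ∈ t, i < x := fun _ hx => List.rel_of_pairwise_cons hs hx
      have hint : i ∉ t.toFinset := by
        intro hmem
        exact lt_irrefl i (hit i (List.mem_toFinset.mp hmem))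
      rcases lt_trichotomy a i with hai | hai | hai
      · -- a < i : prepend
        refine ⟨1, a :: i :: t, ?_, ?_, by rw [one_smul]; conv_rhs => rw [pr_cons]⟩
        · refine List.pairwise_cons.mpr ⟨fun x hx => ?_, hs⟩
          rcases List.mem_cons.mp hx with rfl | hx
          · exact hai
          · exact lt_trans hai (hit x hx)
        · have ha : a ∉ insert i t.toFinset := by
            simp only [Finset.mem_insert, List.mem_toFinset]
            rintro (rfl | hx)
            · exact lt_irrefl a hai
            · exact lt_irrefl a (lt_trans hai (hit a hx))
          simp only [List.toFinset_cons]
          rw [sd_not_mem ha]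
      · -- a = i : cancel
        subst hai
        refine ⟨(if a = 0 then 1 else -1), t, ht, ?_, ?_⟩
        · simp only [List.toFinset_cons]
          rw [sd_insert_self hint]
        · rw [pr_cons, ← mul_assoc, gen_sq Q hQ, Algebra.smul_def]
      · -- i < a : commute past
        obtain ⟨c, m', hs', hF, hmul⟩ := IH ht a
        refine ⟨-c, i :: m', ?_, ?_, ?_⟩
        · refine List.pairwise_cons.mpr ⟨fun x hx => ?_, hs'⟩
          have : x ∈ m'.toFinset := List.mem_toFinset.mpr hx
          rw [hF, Finset.mem_symmDiff] at this
          rcases this with ⟨hx1, _⟩ | ⟨hx1, _⟩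
          · rcases Finset.mem_singleton.mp hx1 with rfl
            exact hai
          · exact hit x (List.mem_toFinset.mp hx1)
        · simp only [List.toFinset_cons]
          rw [hF, sd_insert_comm (ne_of_lt hai) hint]
        · rw [pr_cons, pr_cons, ← mul_assoc, anticomm Q hQ (ne_of_gt hai), neg_mul,
            mul_assoc, hmul, mul_smul_comm, neg_smul, ← neg_smul]


/-- set of indices appearing an odd number of times -/
def oddSet (l : List (Fin (n+1))) : Finset (Fin (n+1)) :=
  l.foldr (fun a s => symmDiff {a} s) ∅

@[simp] lemma oddSet_nil : oddSet (n := n) [] = ∅ := rfl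

@[simp] lemma oddSet_cons (a : Fin (n+1)) (t : List (Fin (n+1))) :
    oddSet (a :: t) = symmDiff {a} (oddSet t) := rfl

lemma oddSet_append (l₁ l₂ : List (Fin (n+1))) :
    oddSet (l₁ ++ l₂) = symmDiff (oddSet l₁) (oddSet l₂) := by
  induction l₁ with
  | nil => simp [← Finset.bot_eq_empty, bot_symmDiff]
  | cons a t ih => simp [ih, symmDiff_assoc]

lemma oddSet_reverse (l : List (Fin (n+1))) : oddSet l.reverse = oddSet l := by
  induction l with
  | nil => rfl
  | cons a t ih =>
      rw [List.reverse_cons, oddSet_append, ih, oddSet_cons]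
      simp [symmDiff_comm]

lemma oddSet_nodup {l : List (Fin (n+1))} (h : l.Nodup) : oddSet l = l.toFinset := by
  induction l with
  | nil => simp
  | cons a t ih =>
      rw [oddSet_cons, ih h.of_cons, List.toFinset_cons,
        sd_not_mem (by simpa using h.notMem)]

variable (b : Module.Basis (Finset (Fin (n + 1))) ℝ (CliffordAlgebra Q))

lemma b_eq_pr (hb : ∀ M : Finset (Fin (n + 1)),
      b M = ((M.sort (· ≤ ·)).map fun i => ι Q (Pi.single i 1)).prod)
    (M : Finset (Fin (n+1))) : b M = pr Q (M.sort (· ≤ ·)) := by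
  rw [hb M]; rfl

lemma sorted_pr_eq_b (hb : ∀ M : Finset (Fin (n + 1)),
      b M = ((M.sort (· ≤ ·)).map fun i => ι Q (Pi.single i 1)).prod)
    {m : List (Fin (n+1))} (hm : m.Pairwise (· < ·)) : pr Q m = b m.toFinset := by
  rw [b_eq_pr Q b hb]
  congr 1
  exact ((List.toFinset_sort (· ≤ ·) hm.nodup).mpr (hm.imp le_of_lt)).symm

lemma b_empty (hb : ∀ M : Finset (Fin (n + 1)),
      b M = ((M.sort (· ≤ ·)).map fun i => ι Q (Pi.single i 1)).prod) :
    b ∅ = 1 := by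
  rw [b_eq_pr Q b hb]
  simp

lemma pr_normal (hQ : ∀ x, Q x = x 0 ^ 2 - ∑ i : Fin n, x i.succ ^ 2)
    (hb : ∀ M : Finset (Fin (n + 1)),
      b M = ((M.sort (· ≤ ·)).map fun i => ι Q (Pi.single i 1)).prod) :
    ∀ l : List (Fin (n+1)), ∃ c : ℝ, pr Q l = c • b (oddSet l) := by
  intro l
  induction l with
  | nil => exact ⟨1, by rw [one_smul, oddSet_nil, b_empty Q b hb, pr_nil]⟩
  | cons a t ih =>
      obtain ⟨c, hc⟩ := ih
      have hsort : (oddSet t).sort (· ≤ ·) |>.Pairwise (· < ·) := (Finset.sortedLT_sort _).pairwise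
      obtain ⟨c', m', hs', hF, hmul⟩ := keyIns Q hQ _ hsort a
      refine ⟨c * c', ?_⟩
      rw [pr_cons, hc, mul_smul_comm, b_eq_pr Q b hb, hmul,
        sorted_pr_eq_b Q b hb hs', hF, Finset.sort_toFinset, ← oddSet_cons, mul_smul]


lemma repr_b (K : Finset (Fin (n+1))) :
    b.repr (b K) ∅ = if ∅ = K then 1 else 0 := by
  rw [Module.Basis.repr_self, Finsupp.single_apply]
  simp [eq_comm]

lemma repr_one (hb : ∀ M : Finset (Fin (n + 1)),
      b M = ((M.sort (· ≤ ·)).map fun i => ι Q (Pi.single i 1)).prod) :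
    b.repr 1 ∅ = 1 := by
  rw [← b_empty Q b hb, repr_b]
  simp

lemma repr_smul_b {K : Finset (Fin (n+1))} (hK : K ≠ ∅) (c : ℝ) :
    b.repr (c • b K) ∅ = 0 := by
  rw [map_smul, Finsupp.smul_apply, repr_b, if_neg (fun h => hK h.symm)]
  simp

lemma sd_elim (M N : Finset (Fin (n+1))) :
    symmDiff (symmDiff (symmDiff M {0}) N) {0} = symmDiff M N := by
  rw [symmDiff_assoc, symmDiff_assoc, symmDiff_comm N {0},
    ← symmDiff_assoc {0} {0} N, symmDiff_self]
  simp [← Finset.bot_eq_empty, bot_symmDiff]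

lemma sd_ne_empty {M N : Finset (Fin (n+1))} (h : M ≠ N) : symmDiff M N ≠ ∅ := by
  rw [← Finset.bot_eq_empty]
  exact fun hc => h (symmDiff_eq_bot.mp hc)

lemma FMN (hQ : ∀ x, Q x = x 0 ^ 2 - ∑ i : Fin n, x i.succ ^ 2)
    (hb : ∀ M : Finset (Fin (n + 1)),
      b M = ((M.sort (· ≤ ·)).map fun i => ι Q (Pi.single i 1)).prod)
    (M N : Finset (Fin (n+1))) :
    b.repr (b M * gen Q 0 * reverse (b N) * gen Q 0) ∅ = if M = N then 1 else 0 := by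
  by_cases h : M = N
  · subst h
    rw [if_pos rfl, b_eq_pr Q b hb, reverse_pr, Dlem Q hQ, gen0_sq Q hQ,
      repr_one Q b hb]
  · rw [if_neg h, b_eq_pr Q b hb, b_eq_pr Q b hb, reverse_pr,
      show gen Q 0 = pr Q [0] from (pr_singleton Q 0).symm,
      ← pr_append, ← pr_append, ← pr_append]
    obtain ⟨c, hc⟩ := pr_normal Q b hQ hb
      (M.sort (· ≤ ·) ++ [0] ++ (N.sort (· ≤ ·)).reverse ++ [0])
    rw [hc]
    have hM : oddSet (M.sort (· ≤ ·)) = M := by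
      rw [oddSet_nodup (Finset.sort_nodup _ _), Finset.sort_toFinset]
    have hN : oddSet (N.sort (· ≤ ·)) = N := by
      rw [oddSet_nodup (Finset.sort_nodup _ _), Finset.sort_toFinset]
    have h0 : oddSet (n := n) [0] = {0} := by
      simp [oddSet_cons, sd_not_mem (Finset.notMem_empty _)]
    have : oddSet (M.sort (· ≤ ·) ++ [0] ++ (N.sort (· ≤ ·)).reverse ++ [0])
        = symmDiff M N := by
      rw [oddSet_append, oddSet_append, oddSet_append, oddSet_reverse, hM, hN, h0,
        sd_elim]
    rw [this]
    exact repr_smul_b Q b (sd_ne_empty h) c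

lemma Fdiag2 (hQ : ∀ x, Q x = x 0 ^ 2 - ∑ i : Fin n, x i.succ ^ 2)
    (hb : ∀ M : Finset (Fin (n + 1)),
      b M = ((M.sort (· ≤ ·)).map fun i => ι Q (Pi.single i 1)).prod)
    (M : Finset (Fin (n+1))) :
    ∃ ε : ℝ, (ε = 1 ∨ ε = -1) ∧ b.repr (b M * reverse (b M)) ∅ = ε := by
  obtain ⟨ε, hε, hmul⟩ := Elem Q hQ (M.sort (· ≤ ·))
  refine ⟨ε, hε, ?_⟩
  rw [b_eq_pr Q b hb, reverse_pr, hmul, Algebra.algebraMap_eq_smul_one,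
    ← b_empty Q b hb, map_smul, Finsupp.smul_apply, repr_b]
  simp

lemma Foff2 (hQ : ∀ x, Q x = x 0 ^ 2 - ∑ i : Fin n, x i.succ ^ 2)
    (hb : ∀ M : Finset (Fin (n + 1)),
      b M = ((M.sort (· ≤ ·)).map fun i => ι Q (Pi.single i 1)).prod)
    {M N : Finset (Fin (n+1))} (h : M ≠ N) :
    b.repr (b M * reverse (b N)) ∅ = 0 := by
  rw [b_eq_pr Q b hb, b_eq_pr Q b hb, reverse_pr, ← pr_append]
  obtain ⟨c, hc⟩ := pr_normal Q b hQ hb (M.sort (· ≤ ·) ++ (N.sort (· ≤ ·)).reverse)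
  rw [hc]
  have : oddSet (M.sort (· ≤ ·) ++ (N.sort (· ≤ ·)).reverse) = symmDiff M N := by
    rw [oddSet_append, oddSet_reverse, oddSet_nodup (Finset.sort_nodup _ _),
      oddSet_nodup (Finset.sort_nodup _ _), Finset.sort_toFinset, Finset.sort_toFinset]
  rw [this]
  exact repr_smul_b Q b (sd_ne_empty h) c

lemma Fgen (hQ : ∀ x, Q x = x 0 ^ 2 - ∑ i : Fin n, x i.succ ^ 2)
    (hb : ∀ M : Finset (Fin (n + 1)),
      b M = ((M.sort (· ≤ ·)).map fun i => ι Q (Pi.single i 1)).prod)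
    {j : Fin (n+1)} (hj : j ≠ 0) :
    b.repr (gen Q j * gen Q 0) ∅ = 0 := by
  have : gen Q j * gen Q 0 = pr Q [j, 0] := by
    rw [pr_cons, pr_singleton]
  rw [this]
  obtain ⟨c, hc⟩ := pr_normal Q b hQ hb [j, 0]
  rw [hc]
  have h1 : oddSet (n := n) [j, 0] = symmDiff {j} {0} := by
    simp [oddSet_cons, sd_not_mem (Finset.notMem_empty _)]
  rw [h1]
  refine repr_smul_b Q b (sd_ne_empty ?_) c
  intro hc
  exact hj (Finset.singleton_injective hc)


lemma expandT (hQ : ∀ x, Q x = x 0 ^ 2 - ∑ i : Fin n, x i.succ ^ 2)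
    (hb : ∀ M : Finset (Fin (n + 1)),
      b M = ((M.sort (· ≤ ·)).map fun i => ι Q (Pi.single i 1)).prod)
    (s : CliffordAlgebra Q) :
    b.repr (s * gen Q 0 * reverse s * gen Q 0) ∅
      = ∑ M : Finset (Fin (n+1)), (b.repr s M) ^ 2 := by
  conv_lhs => rw [← Module.Basis.sum_repr b s]
  simp only [map_sum, map_smul, Finset.sum_mul, Finset.mul_sum, smul_mul_assoc,
    mul_smul_comm, Finsupp.coe_finset_sum, Finset.sum_apply, Finsupp.smul_apply,
    smul_eq_mul]
  simp only [FMN Q b hQ hb]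
  refine Finset.sum_congr rfl fun M _ => ?_
  simp [mul_ite, mul_one, mul_zero, Finset.sum_ite_eq', sq]


lemma norm_coeff (hQ : ∀ x, Q x = x 0 ^ 2 - ∑ i : Fin n, x i.succ ^ 2)
    (hb : ∀ M : Finset (Fin (n + 1)),
      b M = ((M.sort (· ≤ ·)).map fun i => ι Q (Pi.single i 1)).prod)
    (s : CliffordAlgebra Q) (hsnorm : s * reverse s = 1) :
    (1:ℝ) ≤ ∑ M : Finset (Fin (n+1)), (b.repr s M) ^ 2 := by
  have hexp : b.repr (s * reverse s) ∅
      = ∑ M : Finset (Fin (n+1)),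
          (b.repr s M) ^ 2 * (b.repr (b M * reverse (b M)) ∅) := by
    conv_lhs => rw [← Module.Basis.sum_repr b s]
    simp only [map_sum, map_smul, Finset.sum_mul, Finset.mul_sum, smul_mul_assoc,
      mul_smul_comm, Finsupp.coe_finset_sum, Finset.sum_apply, Finsupp.smul_apply,
      smul_eq_mul]
    refine Finset.sum_congr rfl fun M _ => ?_
    rw [Finset.sum_eq_single M]
    · ring
    · intro i _ hi
      rw [Foff2 Q b hQ hb hi, mul_zero, mul_zero]
    · intro h
      exact absurd (Finset.mem_univ M) h
  rw [hsnorm, repr_one Q b hb] at hexp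
  calc (1:ℝ) = ∑ M : Finset (Fin (n+1)),
        (b.repr s M) ^ 2 * (b.repr (b M * reverse (b M)) ∅) := hexp
    _ ≤ ∑ M : Finset (Fin (n+1)), (b.repr s M) ^ 2 := by
        refine Finset.sum_le_sum fun M _ => ?_
        obtain ⟨ε, hε, hεeq⟩ := Fdiag2 Q b hQ hb M
        rw [hεeq]
        have h1 : ε ≤ 1 := by rcases hε with h | h <;> simp [h]
        nlinarith [sq_nonneg (b.repr s M)]

lemma iota_coeff (hQ : ∀ x, Q x = x 0 ^ 2 - ∑ i : Fin n, x i.succ ^ 2)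
    (hb : ∀ M : Finset (Fin (n + 1)),
      b M = ((M.sort (· ≤ ·)).map fun i => ι Q (Pi.single i 1)).prod)
    (x : Fin (n+1) → ℝ) :
    b.repr (ι Q x * gen Q 0) ∅ = x 0 := by
  have hx : x = ∑ j : Fin (n+1), x j • (Pi.single j 1 : Fin (n+1) → ℝ) := by
    have h1 : ∀ j, x j • (Pi.single j 1 : Fin (n+1) → ℝ) = Pi.single j (x j) :=
      fun j => by rw [← Pi.single_smul, smul_eq_mul, mul_one]
    simp only [h1]
    exact (Finset.univ_sum_single x).symm
  conv_lhs => rw [hx]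
  simp only [map_sum, map_smul, Finset.sum_mul, smul_mul_assoc,
    Finsupp.coe_finset_sum, Finset.sum_apply, Finsupp.smul_apply, smul_eq_mul]
  rw [Finset.sum_eq_single 0]
  · rw [show ι Q (Pi.single 0 1) = gen Q 0 from rfl, gen0_sq Q hQ, repr_one Q b hb,
      mul_one]
  · intro j _ hj
    rw [show ι Q (Pi.single j 1) = gen Q j from rfl, Fgen Q b hQ hb hj, mul_zero]
  · intro h
    exact absurd (Finset.mem_univ 0) h

end CoshSpinAux

open CoshSpinAux in
/-- For `s ∈ Spin(1,n) ⊂ C⁺(q)`, `q = x₁² − x₂² − ⋯ − x_{n+1}²`, written `s = Σ_M s_M e_M`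
in the standard basis of the Clifford algebra, the isometry `φ_s(x) = s x s*` of the
hyperboloid model satisfies `cosh (d(e₁, φ_s(e₁))) = Σ_M s_M²`. -/
theorem cosh_dist_spin_image_basePt
    (n : ℕ) (Q : QuadraticForm ℝ (Fin (n + 1) → ℝ))
    (hQ : ∀ x, Q x = x 0 ^ 2 - ∑ i : Fin n, x i.succ ^ 2)
    (b : Module.Basis (Finset (Fin (n + 1))) ℝ (CliffordAlgebra Q))
    (hb : ∀ M : Finset (Fin (n + 1)),
      b M = ((M.sort (· ≤ ·)).map fun i => ι Q (Pi.single i 1)).prod)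
    (s : CliffordAlgebra Q)
    (hseven : s ∈ evenOdd Q 0)
    (hsnorm : s * reverse s = 1)
    (hsE : ∀ v : Fin (n + 1) → ℝ, ∃ w, s * ι Q v * reverse s = ι Q w)
    (x : Fin (n + 1) → ℝ)
    (hx : ι Q x = s * ι Q (basePt n) * reverse s) :
    Real.cosh (hdist (basePt n) x) = ∑ M : Finset (Fin (n + 1)), (b.repr s M) ^ 2 := by
  have hbase : ι Q (basePt n) = gen Q 0 := by
    have : basePt n = (Pi.single 0 1 : Fin (n+1) → ℝ) := by
      funext i
      by_cases hi : i = 0 <;> simp [basePt, Pi.single_apply, hi]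
    rw [this, gen]
  have hT : ι Q x * gen Q 0 = s * gen Q 0 * reverse s * gen Q 0 := by
    rw [hx, hbase]
  have hx0 : x 0 = ∑ M : Finset (Fin (n + 1)), (b.repr s M) ^ 2 := by
    rw [← iota_coeff Q b hQ hb x, hT, expandT Q b hQ hb s]
  have hge : (1:ℝ) ≤ x 0 := hx0 ▸ norm_coeff Q b hQ hb s hsnorm
  have hmink : mink (basePt n) x = x 0 := by
    simp [mink, basePt, Fin.succ_ne_zero]
  rw [← hx0]
  unfold hdist
  rw [hmink]
  set t := x 0 with ht
  have h1 : (0:ℝ) ≤ t ^ 2 - 1 := by nlinarith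
  have hu := Real.sq_sqrt h1
  have hun := Real.sqrt_nonneg (t ^ 2 - 1)
  have hpos : 0 < t + Real.sqrt (t ^ 2 - 1) := by nlinarith
  rw [Real.cosh_log hpos]
  have hprod : (t + Real.sqrt (t ^ 2 - 1)) * (t - Real.sqrt (t ^ 2 - 1)) = 1 := by
    nlinarith
  have hinv : (t + Real.sqrt (t ^ 2 - 1))⁻¹ = t - Real.sqrt (t ^ 2 - 1) :=
    inv_eq_of_mul_eq_one_right hprod
  rw [hinv]
  ring
end

section
/- For any s ∈ Spin(1,n) with |s_ℝ| ≥ 1, where s_ℝ is the scalar (real) part of s, and any x ∈ H^n, the displacement satisfies d(x, φ_s(x)) ≥ 2 log|s_ℝ|. -/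
open CliffordAlgebra

/-- The hyperboloid model of hyperbolic `n`-space. -/
def Hyp (n : ℕ) : Set (Fin (n + 1) → ℝ) := {x | mink x x = 1 ∧ 0 < x 0}

namespace SpinAux

variable {n : ℕ} {Q : QuadraticForm ℝ (Fin (n + 1) → ℝ)}

/-- the `i`-th Clifford generator -/
noncomputable def gen (Q : QuadraticForm ℝ (Fin (n + 1) → ℝ)) (i : Fin (n + 1)) :
    CliffordAlgebra Q := ι Q (Pi.single i 1)

/-- product of generators along a list -/
noncomputable def lprod (Q : QuadraticForm ℝ (Fin (n + 1) → ℝ)) (l : List (Fin (n + 1))) :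
    CliffordAlgebra Q := (l.map (gen Q)).prod

@[simp] lemma lprod_nil : lprod Q [] = 1 := rfl

lemma lprod_cons (i : Fin (n + 1)) (t : List (Fin (n + 1))) :
    lprod Q (i :: t) = gen Q i * lprod Q t := by
  simp [lprod]

lemma lprod_append (l₁ l₂ : List (Fin (n + 1))) :
    lprod Q (l₁ ++ l₂) = lprod Q l₁ * lprod Q l₂ := by
  simp [lprod]

lemma Q_single (hQ : ∀ x, Q x = x 0 ^ 2 - ∑ i : Fin n, x i.succ ^ 2) (i : Fin (n + 1)) :
    Q (Pi.single i 1) = if i = 0 then 1 else -1 := by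
  rw [hQ]
  rcases Fin.eq_zero_or_eq_succ i with rfl | ⟨j, rfl⟩
  · have h0 : (Pi.single 0 1 : Fin (n+1) → ℝ) 0 = 1 := by simp [Pi.single_apply]
    have hs : ∀ k : Fin n, (Pi.single 0 1 : Fin (n+1) → ℝ) k.succ = 0 :=
      fun k => by simp [Pi.single_apply, Fin.succ_ne_zero k]
    simp [h0, hs]
  · have h0 : (Pi.single j.succ 1 : Fin (n+1) → ℝ) 0 = 0 :=
      by simp [Pi.single_apply, (Fin.succ_ne_zero j).symm]
    have hsum : ∑ k : Fin n, (Pi.single j.succ 1 : Fin (n+1) → ℝ) k.succ ^ 2 = 1 := by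
      rw [Finset.sum_eq_single j]
      · simp
      · intro k _ hk
        have : (k.succ : Fin (n+1)) ≠ j.succ := fun h => hk (Fin.succ_injective _ h)
        simp [Pi.single_apply, this]
      · simp
    have : (j.succ : Fin (n + 1)) ≠ 0 := Fin.succ_ne_zero j
    simp [h0, hsum, this]

lemma gen_sq (hQ : ∀ x, Q x = x 0 ^ 2 - ∑ i : Fin n, x i.succ ^ 2) (i : Fin (n + 1)) :
    gen Q i * gen Q i = algebraMap ℝ _ (if i = 0 then 1 else -1) := by
  rw [gen, ι_sq_scalar, Q_single hQ]

lemma gen_zero_sq (hQ : ∀ x, Q x = x 0 ^ 2 - ∑ i : Fin n, x i.succ ^ 2) :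
    gen Q 0 * gen Q 0 = 1 := by
  rw [gen_sq hQ]; simp

lemma polar_eq (hQ : ∀ x, Q x = x 0 ^ 2 - ∑ i : Fin n, x i.succ ^ 2)
    (x y : Fin (n + 1) → ℝ) : QuadraticMap.polar Q x y = 2 * mink x y := by
  have h1 : ∑ i : Fin n, (x i.succ + y i.succ) ^ 2 =
      (∑ i : Fin n, x i.succ ^ 2) + (∑ i : Fin n, y i.succ ^ 2) +
        2 * ∑ i : Fin n, x i.succ * y i.succ := by
    rw [Finset.mul_sum, ← Finset.sum_add_distrib, ← Finset.sum_add_distrib]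
    exact Finset.sum_congr rfl fun i _ => by ring
  simp only [QuadraticMap.polar, hQ, Pi.add_apply]
  rw [h1, mink]
  ring

lemma mink_single_single {i j : Fin (n + 1)} (hij : i ≠ j) :
    mink (Pi.single i (1 : ℝ)) (Pi.single j (1 : ℝ)) = 0 := by
  have key : ∀ a, (Pi.single i 1 : Fin (n+1) → ℝ) a * (Pi.single j 1 : Fin (n+1) → ℝ) a = 0 := by
    intro a
    rcases eq_or_ne a i with rfl | h
    · simp [Pi.single_apply, hij]
    · simp [Pi.single_apply, h]
  simp [mink, key]

lemma gen_anticomm (hQ : ∀ x, Q x = x 0 ^ 2 - ∑ i : Fin n, x i.succ ^ 2)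
    {i j : Fin (n + 1)} (hij : i ≠ j) :
    gen Q i * gen Q j = -(gen Q j * gen Q i) := by
  have h := ι_mul_ι_add_swap (Q := Q) (Pi.single i (1:ℝ)) (Pi.single j (1:ℝ))
  rw [polar_eq hQ, mink_single_single hij] at h
  simp only [mul_zero, map_zero] at h
  have := eq_neg_of_add_eq_zero_left h
  exact this

section Basis

variable (b : Module.Basis (Finset (Fin (n + 1))) ℝ (CliffordAlgebra Q))

lemma hb_lprod (hb : ∀ M : Finset (Fin (n + 1)),
      b M = ((M.sort (· ≤ ·)).map fun i => ι Q (Pi.single i 1)).prod)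
    (M : Finset (Fin (n + 1))) : b M = lprod Q (M.sort (· ≤ ·)) := hb M

lemma b_empty (hb : ∀ M : Finset (Fin (n + 1)),
      b M = ((M.sort (· ≤ ·)).map fun i => ι Q (Pi.single i 1)).prod) :
    b ∅ = 1 := by
  rw [hb_lprod b hb, Finset.sort_empty, lprod_nil]

lemma b_singleton (hb : ∀ M : Finset (Fin (n + 1)),
      b M = ((M.sort (· ≤ ·)).map fun i => ι Q (Pi.single i 1)).prod)
    (i : Fin (n + 1)) : b {i} = gen Q i := by
  rw [hb_lprod b hb, Finset.sort_singleton, lprod_cons, lprod_nil, mul_one]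

lemma gen_mul_b_of_le (hb : ∀ M : Finset (Fin (n + 1)),
      b M = ((M.sort (· ≤ ·)).map fun i => ι Q (Pi.single i 1)).prod)
    {i : Fin (n + 1)} {K : Finset (Fin (n + 1))} (hiK : i ∉ K) (h : ∀ a ∈ K, i ≤ a) :
    gen Q i * b K = b (insert i K) := by
  rw [hb_lprod b hb, hb_lprod b hb, Finset.sort_insert (· ≤ ·) h hiK, lprod_cons]

lemma b_min_decomp (hb : ∀ M : Finset (Fin (n + 1)),
      b M = ((M.sort (· ≤ ·)).map fun i => ι Q (Pi.single i 1)).prod)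
    {K : Finset (Fin (n + 1))} (hne : K.Nonempty) :
    b K = gen Q (K.min' hne) * b (K.erase (K.min' hne)) := by
  rw [gen_mul_b_of_le b hb (Finset.notMem_erase _ _)
    (fun a ha => K.min'_le a (Finset.mem_of_mem_erase ha)),
    Finset.insert_erase (K.min'_mem hne)]

lemma symmDiff_singleton_not_mem {i : Fin (n + 1)} {K : Finset (Fin (n + 1))} (h : i ∉ K) :
    symmDiff {i} K = insert i K := by
  ext a
  simp only [Finset.mem_symmDiff, Finset.mem_singleton, Finset.mem_insert]
  constructor
  · rintro (⟨rfl, -⟩ | ⟨ha, -⟩) <;> tauto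
  · rintro (rfl | ha)
    · exact Or.inl ⟨rfl, h⟩
    · exact Or.inr ⟨ha, fun hai => h (hai ▸ ha)⟩

lemma symmDiff_singleton_mem {i : Fin (n + 1)} {K : Finset (Fin (n + 1))} (h : i ∈ K) :
    symmDiff {i} K = K.erase i := by
  ext a
  simp only [Finset.mem_symmDiff, Finset.mem_singleton, Finset.mem_erase]
  constructor
  · rintro (⟨rfl, ha⟩ | ⟨ha, hai⟩)
    · exact absurd h ha
    · exact ⟨hai, ha⟩
  · rintro ⟨hai, ha⟩
    exact Or.inr ⟨ha, hai⟩

lemma ml2 (hQ : ∀ x, Q x = x 0 ^ 2 - ∑ i : Fin n, x i.succ ^ 2)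
    (hb : ∀ M : Finset (Fin (n + 1)),
      b M = ((M.sort (· ≤ ·)).map fun i => ι Q (Pi.single i 1)).prod)
    (K : Finset (Fin (n + 1))) : ∀ i : Fin (n + 1), ∃ c : ℝ,
      gen Q i * b K = c • b (symmDiff {i} K) := by
  induction K using Finset.strongInduction with
  | _ K ih =>
    intro i
    rcases K.eq_empty_or_nonempty with rfl | hne
    · refine ⟨1, ?_⟩
      have h1 : symmDiff {i} (∅ : Finset (Fin (n+1))) = {i} := by
        simp [symmDiff_singleton_not_mem (Finset.notMem_empty i)]
      rw [b_empty b hb, mul_one, one_smul, h1, b_singleton b hb]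
    · set j := K.min' hne with hj
      have hjK : j ∈ K := K.min'_mem hne
      have hdec := b_min_decomp b hb hne
      rcases lt_trichotomy i j with hij | rfl | hij
      · have hiK : i ∉ K := fun h => absurd (K.min'_le i h) (not_le.mpr hij)
        refine ⟨1, ?_⟩
        rw [one_smul, symmDiff_singleton_not_mem hiK]
        exact gen_mul_b_of_le b hb hiK fun a ha => le_of_lt (lt_of_lt_of_le hij (K.min'_le a ha))
      · refine ⟨if j = 0 then 1 else -1, ?_⟩
        rw [hdec, ← mul_assoc, gen_sq hQ, symmDiff_singleton_mem hjK, Algebra.smul_def]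
      · have hK' : K.erase j ⊂ K := Finset.erase_ssubset hjK
        obtain ⟨c, hc⟩ := ih (K.erase j) hK' i
        have hij' : i ≠ j := ne_of_gt hij
        have hjnotmem : j ∉ symmDiff {i} (K.erase j) := by
          intro hmem
          rw [Finset.mem_symmDiff] at hmem
          rcases hmem with ⟨h1, -⟩ | ⟨h1, -⟩
          · exact hij' (Finset.mem_singleton.mp h1).symm
          · exact (Finset.notMem_erase j K) h1
        have hjle : ∀ a ∈ symmDiff {i} (K.erase j), j ≤ a := by
          intro a ha
          rw [Finset.mem_symmDiff] at ha
          rcases ha with ⟨h1, -⟩ | ⟨h1, -⟩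
          · rw [Finset.mem_singleton] at h1
            exact h1 ▸ le_of_lt hij
          · exact K.min'_le a (Finset.mem_of_mem_erase h1)
        have hins : insert j (symmDiff {i} (K.erase j)) = symmDiff {i} K := by
          ext a
          simp only [Finset.mem_insert, Finset.mem_symmDiff, Finset.mem_singleton,
            Finset.mem_erase]
          constructor
          · rintro (rfl | ⟨rfl, h2⟩ | ⟨⟨h2, h3⟩, h4⟩)
            · exact Or.inr ⟨hjK, Ne.symm hij'⟩
            · exact Or.inl ⟨rfl, fun h => h2 ⟨hij', h⟩⟩
            · exact Or.inr ⟨h3, h4⟩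
          · rintro (⟨rfl, h2⟩ | ⟨h2, h3⟩)
            · exact Or.inr (Or.inl ⟨rfl, fun h => h2 h.2⟩)
            · rcases eq_or_ne a j with rfl | haj
              · exact Or.inl rfl
              · exact Or.inr (Or.inr ⟨⟨haj, h2⟩, h3⟩)
        refine ⟨-c, ?_⟩
        rw [hdec, ← mul_assoc, gen_anticomm hQ hij', neg_mul, mul_assoc, hc,
          mul_smul_comm, gen_mul_b_of_le b hb hjnotmem hjle, hins, ← neg_smul]

/-- set of indices with odd multiplicity in `l` -/
def oddSet (l : List (Fin (n + 1))) : Finset (Fin (n + 1)) :=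
  Finset.univ.filter (fun i => l.count i % 2 = 1)

lemma oddSet_nil : oddSet (n := n) [] = ∅ := by
  simp [oddSet]

lemma oddSet_cons (i : Fin (n + 1)) (t : List (Fin (n + 1))) :
    oddSet (i :: t) = symmDiff {i} (oddSet t) := by
  ext a
  rcases eq_or_ne a i with rfl | h
  · simp only [oddSet, Finset.mem_filter, Finset.mem_univ, true_and, Finset.mem_symmDiff,
      Finset.mem_singleton, List.count_cons_self, not_true, and_false, or_false, and_true]
    omega
  · simp only [oddSet, Finset.mem_filter, Finset.mem_univ, true_and, Finset.mem_symmDiff,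
      Finset.mem_singleton, List.count_cons_of_ne (Ne.symm h), h, false_and, and_true, false_or,
      not_false_iff, and_not_self, or_false]

lemma ml (hQ : ∀ x, Q x = x 0 ^ 2 - ∑ i : Fin n, x i.succ ^ 2)
    (hb : ∀ M : Finset (Fin (n + 1)),
      b M = ((M.sort (· ≤ ·)).map fun i => ι Q (Pi.single i 1)).prod) :
    ∀ l : List (Fin (n + 1)), ∃ c : ℝ, lprod Q l = c • b (oddSet l) := by
  intro l
  induction l with
  | nil => exact ⟨1, by rw [lprod_nil, oddSet_nil, b_empty b hb, one_smul]⟩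
  | cons i t ih =>
    obtain ⟨c, hc⟩ := ih
    obtain ⟨c', hc'⟩ := ml2 b hQ hb (oddSet t) i
    exact ⟨c * c', by rw [lprod_cons, hc, mul_smul_comm, hc', oddSet_cons, smul_smul]⟩

lemma count_sort (M : Finset (Fin (n + 1))) (i : Fin (n + 1)) :
    (M.sort (· ≤ ·)).count i = if i ∈ M then 1 else 0 := by
  split_ifs with h
  · exact List.count_eq_one_of_mem (M.sort_nodup _) ((Finset.mem_sort _).mpr h)
  · exact List.count_eq_zero_of_not_mem (fun hc => h ((Finset.mem_sort _).mp hc))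

lemma oddSet_sort_append (M N : Finset (Fin (n + 1))) :
    oddSet (M.sort (· ≤ ·) ++ N.sort (· ≤ ·)) = symmDiff M N := by
  ext a
  simp only [oddSet, Finset.mem_filter, Finset.mem_univ, true_and, List.count_append,
    count_sort, Finset.mem_symmDiff]
  by_cases h1 : a ∈ M <;> by_cases h2 : a ∈ N <;> simp [h1, h2]

lemma oddSet_rev_sort_append (M N : Finset (Fin (n + 1))) :
    oddSet ((M.sort (· ≤ ·)).reverse ++ N.sort (· ≤ ·)) = symmDiff M N := by
  ext a
  simp only [oddSet, Finset.mem_filter, Finset.mem_univ, true_and, List.count_append,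
    List.count_reverse, count_sort, Finset.mem_symmDiff]
  by_cases h1 : a ∈ M <;> by_cases h2 : a ∈ N <;> simp [h1, h2]

lemma oddSet_rev_sort (M : Finset (Fin (n + 1))) :
    oddSet ((M.sort (· ≤ ·)).reverse) = M := by
  ext a
  simp only [oddSet, Finset.mem_filter, Finset.mem_univ, true_and,
    List.count_reverse, count_sort]
  by_cases h1 : a ∈ M <;> simp [h1]

/-- the scalar-part functional -/
noncomputable def tau (b : Module.Basis (Finset (Fin (n + 1))) ℝ (CliffordAlgebra Q)) :
    CliffordAlgebra Q →ₗ[ℝ] ℝ :=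
  (Finsupp.lapply ∅).comp b.repr.toLinearMap

lemma tau_apply (u : CliffordAlgebra Q) : tau b u = b.repr u ∅ := rfl

lemma tau_b (M : Finset (Fin (n + 1))) :
    tau b (b M) = if M = ∅ then 1 else 0 := by
  rw [tau_apply, Module.Basis.repr_self, Finsupp.single_apply]

lemma tau_one (hb : ∀ M : Finset (Fin (n + 1)),
      b M = ((M.sort (· ≤ ·)).map fun i => ι Q (Pi.single i 1)).prod) :
    tau b 1 = 1 := by
  rw [← b_empty b hb, tau_b]; simp

lemma tau_lprod (hQ : ∀ x, Q x = x 0 ^ 2 - ∑ i : Fin n, x i.succ ^ 2)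
    (hb : ∀ M : Finset (Fin (n + 1)),
      b M = ((M.sort (· ≤ ·)).map fun i => ι Q (Pi.single i 1)).prod)
    {l : List (Fin (n + 1))} (h : oddSet l ≠ ∅) : tau b (lprod Q l) = 0 := by
  obtain ⟨c, hc⟩ := ml b hQ hb l
  rw [hc, map_smul, tau_b]
  simp [h]

lemma b_mul_b (hb : ∀ M : Finset (Fin (n + 1)),
      b M = ((M.sort (· ≤ ·)).map fun i => ι Q (Pi.single i 1)).prod)
    (M N : Finset (Fin (n + 1))) :
    b M * b N = lprod Q (M.sort (· ≤ ·) ++ N.sort (· ≤ ·)) := by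
  rw [hb_lprod b hb, hb_lprod b hb, lprod_append]

lemma tau_mul_comm (hQ : ∀ x, Q x = x 0 ^ 2 - ∑ i : Fin n, x i.succ ^ 2)
    (hb : ∀ M : Finset (Fin (n + 1)),
      b M = ((M.sort (· ≤ ·)).map fun i => ι Q (Pi.single i 1)).prod)
    (u v : CliffordAlgebra Q) : tau b (u * v) = tau b (v * u) := by
  have key : ∀ M N : Finset (Fin (n + 1)), tau b (b M * b N) = tau b (b N * b M) := by
    intro M N
    rcases eq_or_ne M N with rfl | h
    · rfl
    · have h1 : tau b (b M * b N) = 0 := by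
        rw [b_mul_b b hb]
        exact tau_lprod b hQ hb (by rw [oddSet_sort_append]; simp [h])
      have h2 : tau b (b N * b M) = 0 := by
        rw [b_mul_b b hb]
        exact tau_lprod b hQ hb (by rw [oddSet_sort_append, symmDiff_comm]; simp [h])
      rw [h1, h2]
  have heq : ((LinearMap.mul ℝ (CliffordAlgebra Q)).compr₂ (tau b)) =
      ((LinearMap.mul ℝ (CliffordAlgebra Q)).flip.compr₂ (tau b)) :=
    b.ext fun M => b.ext fun N => key M N
  have := LinearMap.congr_fun (LinearMap.congr_fun heq u) v
  simpa using this

lemma reverse_lprod (l : List (Fin (n + 1))) :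
    reverse (lprod Q l) = lprod Q l.reverse := by
  induction l with
  | nil => simp [lprod]
  | cons i t ih =>
    have hrg : reverse (gen Q i) = gen Q i := reverse_ι _
    rw [lprod_cons, reverse.map_mul, ih, List.reverse_cons, lprod_append, lprod_cons,
      lprod_nil, mul_one, hrg]

lemma b_reverse (hb : ∀ M : Finset (Fin (n + 1)),
      b M = ((M.sort (· ≤ ·)).map fun i => ι Q (Pi.single i 1)).prod)
    (M : Finset (Fin (n + 1))) :
    reverse (b M) = lprod Q ((M.sort (· ≤ ·)).reverse) := by
  rw [hb_lprod b hb, reverse_lprod]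

lemma tau_reverse (hQ : ∀ x, Q x = x 0 ^ 2 - ∑ i : Fin n, x i.succ ^ 2)
    (hb : ∀ M : Finset (Fin (n + 1)),
      b M = ((M.sort (· ≤ ·)).map fun i => ι Q (Pi.single i 1)).prod)
    (u : CliffordAlgebra Q) : tau b (reverse u) = tau b u := by
  have key : ∀ M, tau b (reverse (b M)) = tau b (b M) := by
    intro M
    rcases eq_or_ne M ∅ with rfl | h
    · rw [b_empty b hb, reverse.map_one]
    · rw [b_reverse b hb, tau_lprod b hQ hb (by rw [oddSet_rev_sort]; exact h), tau_b, if_neg h]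
  have heq : ((tau b).comp (reverse (Q := Q))) = tau b := b.ext fun M => key M
  exact LinearMap.congr_fun heq u

end Basis

section Conj

variable (b : Module.Basis (Finset (Fin (n + 1))) ℝ (CliffordAlgebra Q))

lemma gen_swap (hQ : ∀ x, Q x = x 0 ^ 2 - ∑ i : Fin n, x i.succ ^ 2)
    {i j : Fin (n + 1)} (hij : i ≠ j) (z : CliffordAlgebra Q) :
    gen Q i * (gen Q j * z) = -(gen Q j * (gen Q i * z)) := by
  rw [← mul_assoc, gen_anticomm hQ hij, neg_mul, mul_assoc]

lemma gen_gen (hQ : ∀ x, Q x = x 0 ^ 2 - ∑ i : Fin n, x i.succ ^ 2)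
    (i : Fin (n + 1)) (z : CliffordAlgebra Q) :
    gen Q i * (gen Q i * z) = (if i = 0 then (1:ℝ) else -1) • z := by
  rw [← mul_assoc, gen_sq hQ, ← Algebra.smul_def]

lemma genE_genE (hQ : ∀ x, Q x = x 0 ^ 2 - ∑ i : Fin n, x i.succ ^ 2)
    (z : CliffordAlgebra Q) : gen Q 0 * (gen Q 0 * z) = z := by
  rw [gen_gen hQ, if_pos rfl, one_smul]

lemma gen_gen_neg (hQ : ∀ x, Q x = x 0 ^ 2 - ∑ i : Fin n, x i.succ ^ 2)
    {i : Fin (n + 1)} (h : i ≠ 0) (z : CliffordAlgebra Q) :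
    gen Q i * (gen Q i * z) = -z := by
  rw [gen_gen hQ, if_neg h, neg_one_smul]

lemma conjE (hQ : ∀ x, Q x = x 0 ^ 2 - ∑ i : Fin n, x i.succ ^ 2)
    (l : List (Fin (n + 1))) :
    ∃ c : ℝ, gen Q 0 * (lprod Q l * gen Q 0) = c • lprod Q l := by
  induction l with
  | nil =>
    refine ⟨1, ?_⟩
    rw [lprod_nil, one_mul, gen_zero_sq hQ, one_smul]
  | cons i t ih =>
    obtain ⟨c, hc⟩ := ih
    rcases eq_or_ne i 0 with rfl | h
    · refine ⟨c, ?_⟩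
      have h2 : lprod Q t * gen Q 0 = c • (gen Q 0 * lprod Q t) := by
        have h3 := congrArg (fun z => gen Q 0 * z) hc
        simp only [genE_genE hQ, mul_smul_comm] at h3
        exact h3
      rw [lprod_cons, mul_assoc, genE_genE hQ, h2]
    · refine ⟨-c, ?_⟩
      rw [lprod_cons, mul_assoc, gen_swap hQ (Ne.symm h), hc, mul_smul_comm, ← neg_smul]

lemma diagE (hQ : ∀ x, Q x = x 0 ^ 2 - ∑ i : Fin n, x i.succ ^ 2)
    (l : List (Fin (n + 1))) :
    gen Q 0 * (lprod Q l.reverse * (gen Q 0 * lprod Q l)) = 1 := by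
  induction l with
  | nil =>
    rw [List.reverse_nil, lprod_nil, one_mul, mul_one, gen_zero_sq hQ]
  | cons i t ih =>
    rw [List.reverse_cons, lprod_append, lprod_cons, lprod_cons, lprod_nil, mul_one]
    rcases eq_or_ne i 0 with rfl | h
    · calc gen Q 0 * ((lprod Q t.reverse * gen Q 0) * (gen Q 0 * (gen Q 0 * lprod Q t)))
          = gen Q 0 * (lprod Q t.reverse * (gen Q 0 * lprod Q t)) := by
            rw [genE_genE hQ, mul_assoc]
        _ = 1 := ih
    · calc gen Q 0 * ((lprod Q t.reverse * gen Q i) * (gen Q 0 * (gen Q i * lprod Q t)))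
          = gen Q 0 * (lprod Q t.reverse * (gen Q i * (gen Q 0 * (gen Q i * lprod Q t)))) := by
            rw [mul_assoc]
        _ = gen Q 0 * (lprod Q t.reverse * (gen Q 0 * lprod Q t)) := by
            rw [gen_swap hQ h, gen_gen_neg hQ h]
            simp only [mul_neg, neg_neg]
        _ = 1 := ih

lemma diag_b (hQ : ∀ x, Q x = x 0 ^ 2 - ∑ i : Fin n, x i.succ ^ 2)
    (hb : ∀ M : Finset (Fin (n + 1)),
      b M = ((M.sort (· ≤ ·)).map fun i => ι Q (Pi.single i 1)).prod)
    (M : Finset (Fin (n + 1))) :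
    gen Q 0 * (reverse (b M) * (gen Q 0 * b M)) = 1 := by
  rw [b_reverse b hb]
  conv_lhs => rw [hb_lprod b hb]
  exact diagE hQ _

lemma offdiag_b (hQ : ∀ x, Q x = x 0 ^ 2 - ∑ i : Fin n, x i.succ ^ 2)
    (hb : ∀ M : Finset (Fin (n + 1)),
      b M = ((M.sort (· ≤ ·)).map fun i => ι Q (Pi.single i 1)).prod)
    {M N : Finset (Fin (n + 1))} (h : M ≠ N) :
    tau b (gen Q 0 * (reverse (b M) * (gen Q 0 * b N))) = 0 := by
  obtain ⟨c, hc⟩ := conjE hQ ((M.sort (· ≤ ·)).reverse)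
  have regroup : gen Q 0 * (lprod Q ((M.sort (· ≤ ·)).reverse) * (gen Q 0 * b N)) =
      (gen Q 0 * (lprod Q ((M.sort (· ≤ ·)).reverse) * gen Q 0)) * b N := by
    simp only [mul_assoc]
  rw [b_reverse b hb, regroup, hc, smul_mul_assoc, map_smul]
  have happ : lprod Q ((M.sort (· ≤ ·)).reverse) * b N =
      lprod Q ((M.sort (· ≤ ·)).reverse ++ N.sort (· ≤ ·)) := by
    rw [lprod_append, hb_lprod b hb]
  rw [happ, tau_lprod b hQ hb (by rw [oddSet_rev_sort_append]; simp [h])]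
  simp

lemma tau_EuEu (hQ : ∀ x, Q x = x 0 ^ 2 - ∑ i : Fin n, x i.succ ^ 2)
    (hb : ∀ M : Finset (Fin (n + 1)),
      b M = ((M.sort (· ≤ ·)).map fun i => ι Q (Pi.single i 1)).prod)
    (M N : Finset (Fin (n + 1))) :
    tau b (gen Q 0 * (reverse (b M) * (gen Q 0 * b N))) = if M = N then 1 else 0 := by
  split_ifs with h
  · subst h
    rw [diag_b b hQ hb, tau_one b hb]
  · exact offdiag_b b hQ hb h

lemma psd_E (hQ : ∀ x, Q x = x 0 ^ 2 - ∑ i : Fin n, x i.succ ^ 2)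
    (hb : ∀ M : Finset (Fin (n + 1)),
      b M = ((M.sort (· ≤ ·)).map fun i => ι Q (Pi.single i 1)).prod)
    (w : CliffordAlgebra Q) :
    0 ≤ tau b (gen Q 0 * (reverse w * (gen Q 0 * w))) := by
  have hw := b.sum_repr w
  set f : Finset (Fin (n + 1)) → ℝ := fun M => b.repr w M with hf
  have key : gen Q 0 * (reverse w * (gen Q 0 * w)) =
      ∑ M : Finset (Fin (n + 1)), ∑ N : Finset (Fin (n + 1)),
        (f N * f M) • (gen Q 0 * (reverse (b M) * (gen Q 0 * b N))) := by
    conv_lhs => rw [← hw]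
    rw [map_sum]
    simp only [map_smul, Finset.mul_sum, Finset.sum_mul, mul_smul_comm, smul_mul_assoc,
      smul_smul, Finset.smul_sum]
    rw [Finset.sum_comm]
  rw [key, map_sum]
  have hdiag : ∀ M ∈ Finset.univ, tau b (∑ N : Finset (Fin (n + 1)),
      (f N * f M) • (gen Q 0 * (reverse (b M) * (gen Q 0 * b N)))) = f M * f M := by
    intro M _
    rw [map_sum, Finset.sum_eq_single M]
    · rw [map_smul, tau_EuEu b hQ hb, if_pos rfl, smul_eq_mul, mul_one]
    · intro N _ hN
      rw [map_smul, tau_EuEu b hQ hb, if_neg (Ne.symm hN), smul_eq_mul, mul_zero]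
    · intro h
      exact absurd (Finset.mem_univ M) h
  rw [Finset.sum_congr rfl hdiag]
  exact Finset.sum_nonneg fun M _ => mul_self_nonneg _

end Conj

section PSD

variable (b : Module.Basis (Finset (Fin (n + 1))) ℝ (CliffordAlgebra Q))

lemma Q_eq_mink (hQ : ∀ x, Q x = x 0 ^ 2 - ∑ i : Fin n, x i.succ ^ 2)
    (x : Fin (n + 1) → ℝ) : Q x = mink x x := by
  rw [hQ, mink]
  simp only [pow_two]

lemma mink_single0 (x : Fin (n + 1) → ℝ) : mink x (Pi.single 0 1) = x 0 := by
  have h0 : (Pi.single 0 1 : Fin (n+1) → ℝ) 0 = 1 := by simp [Pi.single_apply]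
  have hs : ∀ k : Fin n, (Pi.single 0 1 : Fin (n+1) → ℝ) k.succ = 0 :=
    fun k => by simp [Pi.single_apply, Fin.succ_ne_zero k]
  simp [mink, h0, hs]

lemma tau_algebraMap (hb : ∀ M : Finset (Fin (n + 1)),
      b M = ((M.sort (· ≤ ·)).map fun i => ι Q (Pi.single i 1)).prod) (r : ℝ) :
    tau b (algebraMap ℝ (CliffordAlgebra Q) r) = r := by
  rw [Algebra.algebraMap_eq_smul_one, map_smul, tau_one b hb, smul_eq_mul, mul_one]

lemma psd_x (hQ : ∀ x, Q x = x 0 ^ 2 - ∑ i : Fin n, x i.succ ^ 2)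
    (hb : ∀ M : Finset (Fin (n + 1)),
      b M = ((M.sort (· ≤ ·)).map fun i => ι Q (Pi.single i 1)).prod)
    {x : Fin (n + 1) → ℝ} (hQx : Q x = 1) (hx0 : 0 < x 0)
    (u : CliffordAlgebra Q) :
    0 ≤ tau b (ι Q x * (reverse u * (ι Q x * u))) := by
  set X : CliffordAlgebra Q := ι Q x with hXdef
  set E : CliffordAlgebra Q := gen Q 0 with hEdef
  set c : ℝ := x 0 with hcdef
  have h1 : X * X = 1 := by rw [hXdef, ι_sq_scalar, hQx, map_one]
  have h2 : E * E = 1 := gen_zero_sq hQ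
  have hpol : X * E + E * X = algebraMap ℝ _ (2 * c) := by
    have := ι_mul_ι_add_swap (Q := Q) x (Pi.single 0 1)
    rwa [polar_eq hQ, mink_single0] at this
  have hXE : X * E = algebraMap ℝ _ (2*c) - E * X := eq_sub_of_add_eq hpol
  set r0 : CliffordAlgebra Q := 1 + E * X with hr0
  set u0 : CliffordAlgebra Q := 1 + X * E with hu0
  have hrevu0 : reverse u0 = r0 := by
    rw [hu0, hr0, map_add, reverse.map_one, reverse.map_mul, reverse_ι, hEdef, gen, reverse_ι]
  have hrevr0 : reverse r0 = u0 := by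
    rw [← hrevu0, reverse_reverse]
  have hkey : u0 * (E * r0) = (2 + 2*c) • X := by
    have e1 : E * r0 = E + X := by
      rw [hr0, mul_add, mul_one, ← mul_assoc, h2, one_mul]
    have e2 : (X * E) * X = (2*c) • X - E := by
      rw [hXE, sub_mul, ← Algebra.smul_def, mul_assoc, h1, mul_one]
    have e3 : (X * E) * E = X := by rw [mul_assoc, h2, mul_one]
    rw [e1, hu0, add_mul, one_mul, mul_add, e3, e2, add_smul, two_smul ℝ X]
    abel
  have hc2 : (0:ℝ) < 2 + 2*c := by rw [hcdef]; linarith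
  set t : ℝ := (2 + 2*c)⁻¹ with ht
  have hXrep : X = t • (u0 * (E * r0)) := by
    rw [hkey, smul_smul, ht, inv_mul_cancel₀ (ne_of_gt hc2), one_smul]
  set P : CliffordAlgebra Q := u0 * (E * r0) with hPdef
  have hsub : X * (reverse u * (X * u)) = (t*t) • (P * (reverse u * (P * u))) := by
    conv_lhs => rw [hXrep]
    simp only [smul_mul_assoc, mul_smul_comm, smul_smul]
  rw [hsub, map_smul, smul_eq_mul]
  have htt : 0 ≤ t * t := mul_self_nonneg t
  have hP2 : 0 ≤ tau b (P * (reverse u * (P * u))) := by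
    set w : CliffordAlgebra Q := r0 * (u * u0) with hwdef
    have hrw : reverse w = r0 * (reverse u * u0) := by
      rw [hwdef, reverse.map_mul, reverse.map_mul, hrevr0, hrevu0, mul_assoc]
    have step1 : P * (reverse u * (P * u)) =
        u0 * ((E * (r0 * (reverse u * (u0 * (E * (r0 * u)))))) ) := by
      rw [hPdef]; simp only [mul_assoc]
    have step2 : (E * (r0 * (reverse u * (u0 * (E * (r0 * u)))))) * u0 =
        E * (reverse w * (E * w)) := by
      rw [hrw, hwdef]; simp only [mul_assoc]
    rw [step1, tau_mul_comm b hQ hb, step2]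
    exact psd_E b hQ hb w
  positivity
end PSD

section CS

variable (b : Module.Basis (Finset (Fin (n + 1))) ℝ (CliffordAlgebra Q))

lemma tau_sq_le (hQ : ∀ x, Q x = x 0 ^ 2 - ∑ i : Fin n, x i.succ ^ 2)
    (hb : ∀ M : Finset (Fin (n + 1)),
      b M = ((M.sort (· ≤ ·)).map fun i => ι Q (Pi.single i 1)).prod)
    {x : Fin (n + 1) → ℝ} (hQx : Q x = 1) (hx0 : 0 < x 0)
    {u : CliffordAlgebra Q} (hu : ι Q x * (u * ι Q x) = u) :
    (tau b u)^2 ≤ tau b (u * reverse u) := by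
  set e : CliffordAlgebra Q := ι Q x with hedef
  have hee : e * e = 1 := by rw [hedef, ι_sq_scalar, hQx, map_one]
  set α : ℝ := tau b u with hα
  have hre : reverse e = e := by rw [hedef]; exact reverse_ι x
  have hrev : e * (reverse u * e) = reverse u := by
    have h3 := congrArg (reverse (Q := Q)) hu
    simp only [reverse.map_mul, hre] at h3
    rwa [mul_assoc] at h3
  set v : CliffordAlgebra Q := u - α • 1 with hv
  have hrv : reverse v = reverse u - α • 1 := by
    rw [hv, map_sub, map_smul, reverse.map_one]
  have hexp : e * (reverse v * (e * v)) =
      e * (reverse u * (e * u)) - α • (e * (reverse u * e)) - α • (e * (e * u))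
        + (α * α) • (e * e) := by
    rw [hrv, hv]
    simp only [mul_sub, sub_mul, mul_smul_comm, smul_mul_assoc, one_mul, mul_one, smul_smul]
    module
  have hpsd := psd_x b hQ hb hQx hx0 v
  rw [hexp] at hpsd
  simp only [map_add, map_sub, map_smul, smul_eq_mul] at hpsd
  have h0 : tau b (e * (reverse u * (e * u))) = tau b (u * reverse u) := by
    rw [tau_mul_comm b hQ hb]
    have : (reverse u * (e * u)) * e = reverse u * (e * (u * e)) := by
      simp only [mul_assoc]
    rw [this, hu, tau_mul_comm b hQ hb]
  have h1 : tau b (e * (reverse u * e)) = tau b u := by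
    rw [hrev, tau_reverse b hQ hb]
  have h2 : tau b (e * (e * u)) = tau b u := by
    rw [← mul_assoc, hee, one_mul]
  have h3 : tau b (e * e) = 1 := by rw [hee, tau_one b hb]
  rw [h0, h1, h2, h3] at hpsd
  nlinarith [hpsd]

lemma tau_sq_nonpos (hQ : ∀ x, Q x = x 0 ^ 2 - ∑ i : Fin n, x i.succ ^ 2)
    (hb : ∀ M : Finset (Fin (n + 1)),
      b M = ((M.sort (· ≤ ·)).map fun i => ι Q (Pi.single i 1)).prod)
    {x : Fin (n + 1) → ℝ} (hQx : Q x = 1) (hx0 : 0 < x 0)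
    {u : CliffordAlgebra Q} (hu : ι Q x * (u * ι Q x) = -u) :
    tau b (u * reverse u) ≤ 0 := by
  set e : CliffordAlgebra Q := ι Q x with hedef
  have hpsd := psd_x b hQ hb hQx hx0 u
  have h0 : tau b (e * (reverse u * (e * u))) = - tau b (u * reverse u) := by
    rw [tau_mul_comm b hQ hb]
    have : (reverse u * (e * u)) * e = reverse u * (e * (u * e)) := by
      simp only [mul_assoc]
    rw [this, hu, mul_neg, map_neg, tau_mul_comm b hQ hb]
  rw [← hedef] at hpsd
  rw [h0] at hpsd
  linarith

end CS

end SpinAux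

/-- For `s ∈ Spin(1,n)` with real part `|s_ℝ| ≥ 1` and any `x ∈ H^n`, the displacement of
`x` under the isometry `φ_s(x) = s x s*` satisfies `d(x, φ_s(x)) ≥ 2 log |s_ℝ|`. -/
theorem displacement_ge_two_log_real_part
    (n : ℕ) (Q : QuadraticForm ℝ (Fin (n + 1) → ℝ))
    (hQ : ∀ x, Q x = x 0 ^ 2 - ∑ i : Fin n, x i.succ ^ 2)
    (b : Module.Basis (Finset (Fin (n + 1))) ℝ (CliffordAlgebra Q))
    (hb : ∀ M : Finset (Fin (n + 1)),
      b M = ((M.sort (· ≤ ·)).map fun i => ι Q (Pi.single i 1)).prod)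
    (s : CliffordAlgebra Q)
    (hseven : s ∈ evenOdd Q 0)
    (hsnorm : s * reverse s = 1)
    (hsE : ∀ v : Fin (n + 1) → ℝ, ∃ w, s * ι Q v * reverse s = ι Q w)
    (hreal : 1 ≤ |b.repr s ∅|)
    (x : Fin (n + 1) → ℝ) (hx : x ∈ Hyp n)
    (y : Fin (n + 1) → ℝ)
    (hy : ι Q y = s * ι Q x * reverse s) :
    2 * Real.log |b.repr s ∅| ≤ hdist x y := by
  classical
  obtain ⟨hx1, hx0⟩ := hx
  set e : CliffordAlgebra Q := ι Q x with hedef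
  have hQx : Q x = 1 := by rw [SpinAux.Q_eq_mink hQ]; exact hx1
  have hee : e * e = 1 := by rw [hedef, ι_sq_scalar, hQx, map_one]
  have hre : reverse e = e := by rw [hedef]; exact reverse_ι x
  set sR : CliffordAlgebra Q := reverse s with hsR
  set sc : CliffordAlgebra Q := e * (s * e) with hsc
  have hscrev : reverse sc = e * (sR * e) := by
    rw [hsc]
    simp only [reverse.map_mul, hre, ← hsR, mul_assoc]
  have hcan : ∀ z : CliffordAlgebra Q, e * (e * z) = z := fun z => by
    rw [← mul_assoc, hee, one_mul]
  have hscsc : sc * reverse sc = 1 := by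
    rw [hscrev, hsc]
    calc (e * (s * e)) * (e * (sR * e)) = e * (s * (e * (e * (sR * e)))) := by
          simp only [mul_assoc]
      _ = e * (s * (sR * e)) := by rw [hcan]
      _ = e * ((s * sR) * e) := by rw [← mul_assoc s]
      _ = e * e := by rw [hsnorm, one_mul]
      _ = 1 := hee
  set P : CliffordAlgebra Q := s + sc with hP
  set Mv : CliffordAlgebra Q := s - sc with hM
  have hPrev : reverse P = sR + reverse sc := by rw [hP, map_add, ← hsR]
  have hMrev : reverse Mv = sR - reverse sc := by rw [hM, map_sub, ← hsR]
  have hsc_conj : e * (sc * e) = s := by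
    rw [hsc]
    calc e * ((e * (s * e)) * e) = e * (e * (s * (e * e))) := by simp only [mul_assoc]
      _ = s * (e * e) := by rw [hcan]
      _ = s := by rw [hee, mul_one]
  have hPconj : e * (P * e) = P := by
    rw [hP, add_mul, mul_add, hsc_conj, ← hsc]
    exact add_comm sc s
  have hMconj : e * (Mv * e) = -Mv := by
    rw [hM, sub_mul, mul_sub, hsc_conj, ← hsc, neg_sub]
  set f : CliffordAlgebra Q := ι Q y with hfdef
  have hy' : f = s * (e * sR) := by rw [hy, mul_assoc]
  have hminkid : e * f + f * e = algebraMap ℝ _ (2 * mink x y) := by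
    have h := ι_mul_ι_add_swap (Q := Q) x y
    rwa [SpinAux.polar_eq hQ, ← hedef, ← hfdef] at h
  have hfe : f * e = s * reverse sc := by
    rw [hy', hscrev]; simp only [mul_assoc]
  have hef : e * f = sc * sR := by
    rw [hy', hsc]; simp only [mul_assoc]
  have hIDsum : P * reverse P + Mv * reverse Mv =
      (s * sR + sc * reverse sc) + (s * sR + sc * reverse sc) := by
    rw [hPrev, hP, hMrev, hM]
    simp only [mul_add, add_mul, mul_sub, sub_mul]
    abel
  have hI1 : SpinAux.tau b (P * reverse P) + SpinAux.tau b (Mv * reverse Mv) = 4 := by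
    rw [← map_add, hIDsum, hsnorm, hscsc]
    simp only [map_add, SpinAux.tau_one b hb]
    norm_num
  have hIDdiff : P * reverse P - Mv * reverse Mv = (e * f + f * e) + (e * f + f * e) := by
    rw [hPrev, hP, hMrev, hM, hef, hfe]
    simp only [mul_add, add_mul, mul_sub, sub_mul]
    abel
  have hI2 : SpinAux.tau b (P * reverse P) - SpinAux.tau b (Mv * reverse Mv) =
      4 * mink x y := by
    rw [← map_sub, hIDdiff, hminkid, map_add, SpinAux.tau_algebraMap b hb]
    ring
  have hτsc : SpinAux.tau b sc = SpinAux.tau b s := by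
    rw [hsc, SpinAux.tau_mul_comm b hQ hb, mul_assoc, hee, mul_one]
  have hτP : SpinAux.tau b P = 2 * b.repr s ∅ := by
    have hτs : SpinAux.tau b s = b.repr s ∅ := rfl
    rw [hP, map_add, hτsc, hτs]; ring
  have hcs : (SpinAux.tau b P) ^ 2 ≤ SpinAux.tau b (P * reverse P) :=
    SpinAux.tau_sq_le b hQ hb hQx hx0 (by rw [← hedef]; exact hPconj)
  have hneg : SpinAux.tau b (Mv * reverse Mv) ≤ 0 :=
    SpinAux.tau_sq_nonpos b hQ hb hQx hx0 (by rw [← hedef]; exact hMconj)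
  set a : ℝ := b.repr s ∅ with hadef
  have hPP : SpinAux.tau b (P * reverse P) = 2 + 2 * mink x y := by linarith [hI1, hI2, hneg]
  have hm : 2 * a ^ 2 - 1 ≤ mink x y := by
    rw [hτP] at hcs
    nlinarith [hcs, hPP]
  have ha2 : 1 ≤ a ^ 2 := by nlinarith [hreal, sq_abs a, abs_nonneg a]
  have hane : |a| ≠ 0 := by
    have : (0:ℝ) < |a| := lt_of_lt_of_le one_pos hreal
    exact ne_of_gt this
  have hlog : 2 * Real.log |a| = Real.log (a ^ 2) := by
    rw [two_mul, ← Real.log_mul hane hane, abs_mul_abs_self, pow_two]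
  simp only [hdist]
  rw [hlog]
  apply Real.log_le_log (by nlinarith [ha2])
  have hs0 : 0 ≤ Real.sqrt ((mink x y) ^ 2 - 1) := Real.sqrt_nonneg _
  linarith [hm, ha2, hs0]
end

section
/- Let k be a totally real number field of degree d over ℚ with ring of integers O_k, and let I ⊂ O_k be a nonzero ideal. If y ∈ O_k is nonzero, 2y ∈ I², and |σ(y)| ≤ 2 for all nontrivial real embeddings σ of k, then |y| ≥ N(I)²/2^{2d−1}, where N(I) = |O_k/I| and |y| denotes the absolute value of y under the distinguished real embedding. -/
open NumberField Finset

lemma abs_norm_eq_prod_embeddings_aux (k : Type*) [Field k] [NumberField k] (x : k) :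
    (|(Algebra.norm ℚ x : ℚ)| : ℝ) = ∏ φ : k →+* ℂ, ‖φ x‖ := by
  have h := congr_arg (‖·‖) (Algebra.norm_eq_prod_embeddings ℚ ℂ x)
  rw [norm_prod] at h
  rw [Fintype.prod_equiv (RingHom.equivRatAlgHom k ℂ) (fun φ => ‖φ x‖)
      (fun f => ‖f x‖) (fun _ => by simp [RingHom.equivRatAlgHom_apply]),
    ← h, eq_ratCast]
  simp [Complex.norm_real]

/-- Let `k` be a totally real number field of degree `d` with ring of integers `O_k`,
distinguished real embedding `σ₀`, and let `I ⊂ O_k` be a nonzero ideal.  If `y ∈ O_k` is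
nonzero, `2y ∈ I²`, and `|σ(y)| ≤ 2` for every nontrivial real embedding `σ`, then
`|σ₀(y)| ≥ N(I)²/2^{2d−1}`. -/
theorem abs_ge_norm_sq_of_two_mem_sq
    (k : Type*) [Field k] [NumberField k] (d : ℕ)
    (hd : Module.finrank ℚ k = d)
    (hreal : Fintype.card (k →+* ℝ) = d)
    (σ₀ : k →+* ℝ)
    (I : Ideal (𝓞 k)) (hI : I ≠ ⊥)
    (y : 𝓞 k) (hy : y ≠ 0)
    (h2y : 2 * y ∈ I ^ 2)
    (hσ : ∀ σ : k →+* ℝ, σ ≠ σ₀ → |σ (y : k)| ≤ 2) :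
    (Ideal.absNorm I : ℝ) ^ 2 / 2 ^ (2 * d - 1) ≤ |σ₀ (y : k)| := by
  classical
  have h2y0 : (2 : 𝓞 k) * y ≠ 0 := mul_ne_zero two_ne_zero hy
  -- norm divisibility
  have hle : Ideal.span {2 * y} ≤ I ^ 2 := (Ideal.span_singleton_le_iff_mem _).mpr h2y
  have hdvd : Ideal.absNorm (I ^ 2) ∣ Ideal.absNorm (Ideal.span {2 * y}) :=
    Ideal.absNorm_dvd_absNorm_of_le hle
  have hne : Ideal.absNorm (Ideal.span {2 * y}) ≠ 0 := by
    simp [Ideal.absNorm_eq_zero_iff, Ideal.span_singleton_eq_bot, h2y0, hy]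
  have hnat : (Ideal.absNorm I) ^ 2 ≤ Ideal.absNorm (Ideal.span {2 * y}) := by
    rw [← map_pow]
    exact Nat.le_of_dvd (Nat.pos_of_ne_zero hne) hdvd
  -- absNorm of span = abs of field norm
  have hspan : ((Ideal.absNorm (Ideal.span {2 * y}) : ℝ)) =
      |(Algebra.norm ℚ ((2 * y : 𝓞 k) : k) : ℚ)| := by
    rw [Ideal.absNorm_span_singleton, ← Algebra.coe_norm_int, Rat.cast_abs,
      Nat.cast_natAbs]
    norm_cast
  -- bijection between real and complex embeddings
  have hcardC : Fintype.card (k →+* ℂ) = d := by rw [Embeddings.card k ℂ, hd]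
  set f : (k →+* ℝ) → (k →+* ℂ) := fun σ => Complex.ofRealHom.comp σ with hf
  have hfinj : Function.Injective f := by
    intro σ τ h
    ext x
    have := RingHom.congr_fun h x
    exact Complex.ofReal_injective (by simpa [f] using this)
  have hfbij : Function.Bijective f :=
    (Fintype.bijective_iff_injective_and_card f).mpr ⟨hfinj, by rw [hreal, hcardC]⟩
  have hprodR : ∀ x : k, (|(Algebra.norm ℚ x : ℚ)| : ℝ) = ∏ σ : (k →+* ℝ), |σ x| := by
    intro x
    rw [abs_norm_eq_prod_embeddings_aux k x,
      ← Fintype.prod_bijective f hfbij (fun σ => |σ x|) (fun φ => ‖φ x‖)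
        (fun σ => by simp [hf, Complex.norm_real])]
  -- product over real embeddings of 2y
  have hd1 : 1 ≤ d := by
    rw [← hreal]
    exact Fintype.card_pos_iff.mpr ⟨σ₀⟩
  have habs : ∀ σ : (k →+* ℝ), |σ ((2 * y : 𝓞 k) : k)| = 2 * |σ (y : k)| := by
    intro σ
    have h2 : ((2 * y : 𝓞 k) : k) = 2 * (y : k) := by
      push_cast
      norm_cast
    rw [h2, map_mul, abs_mul, map_ofNat, abs_two]
  have key : ((Ideal.absNorm I : ℝ)) ^ 2 ≤ 2 ^ d * ∏ σ : (k →+* ℝ), |σ (y : k)| := by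
    calc ((Ideal.absNorm I : ℝ)) ^ 2 ≤ (Ideal.absNorm (Ideal.span {2 * y}) : ℝ) := by
          exact_mod_cast hnat
      _ = ∏ σ : (k →+* ℝ), |σ ((2 * y : 𝓞 k) : k)| := by
          rw [hspan, Rat.cast_abs]; exact hprodR _
      _ = ∏ σ : (k →+* ℝ), 2 * |σ (y : k)| := by simp_rw [habs]
      _ = 2 ^ d * ∏ σ : (k →+* ℝ), |σ (y : k)| := by
          rw [Finset.prod_mul_distrib, Finset.prod_const, Finset.card_univ, hreal]
  -- split off σ₀
  have hsplit : ∏ σ : (k →+* ℝ), |σ (y : k)| =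
      |σ₀ (y : k)| * ∏ σ ∈ Finset.univ.erase σ₀, |σ (y : k)| :=
    (Finset.mul_prod_erase Finset.univ _ (Finset.mem_univ σ₀)).symm
  have hrest : ∏ σ ∈ Finset.univ.erase σ₀, |σ (y : k)| ≤ 2 ^ (d - 1) := by
    have := Finset.prod_le_prod (s := Finset.univ.erase σ₀) (f := fun σ => |σ (y : k)|)
      (g := fun _ => (2:ℝ)) (fun σ _ => abs_nonneg _)
      (fun σ hσ' => hσ σ (Finset.mem_erase.mp hσ').1)
    rwa [Finset.prod_const, Finset.card_erase_of_mem (Finset.mem_univ σ₀), Finset.card_univ,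
      hreal] at this
  have hrest0 : (0:ℝ) ≤ ∏ σ ∈ Finset.univ.erase σ₀, |σ (y : k)| :=
    Finset.prod_nonneg fun σ _ => abs_nonneg _
  have h0 : (0:ℝ) ≤ |σ₀ (y : k)| := abs_nonneg _
  have key2 : ((Ideal.absNorm I : ℝ)) ^ 2 ≤ 2 ^ (2 * d - 1) * |σ₀ (y : k)| := by
    calc ((Ideal.absNorm I : ℝ)) ^ 2
        ≤ 2 ^ d * (|σ₀ (y : k)| * ∏ σ ∈ Finset.univ.erase σ₀, |σ (y : k)|) := by
          rw [← hsplit]; exact key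
      _ ≤ 2 ^ d * (|σ₀ (y : k)| * 2 ^ (d - 1)) := by
          gcongr
      _ = 2 ^ (2 * d - 1) * |σ₀ (y : k)| := by
          rw [show 2 * d - 1 = d + (d - 1) by omega, pow_add]; ring
  rw [div_le_iff₀ (by positivity)]
  linarith [key2]
end
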